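/- Let S ⊆ ℝ^9 be the union of J̃'(8,2) = {e_i + e_j : 1 ≤ i < j ≤ 8}, the single vector ((1/3)^8, −2/3) (first eight coordinates 1/3, last coordinate −2/3), the 8 vectors e_i + e_9 for 1 ≤ i ≤ 8, and the 8 vectors having seven of the first eight coordinates equal to 1/3, one of the first eight coordinates equal to −2/3, and last coordinate 1/3. Then S has exactly 45 points, S is a two-distance set in the hyperplane H = {x ∈ ℝ^9 : x_1 + ⋯ + x_9 = 2} with distances √2 and 2, and S is maximal: no point y ∈ H \ S can be added to S while keeping it a two-distance set. -/

import Mathlib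

noncomputable section

/-- The set of distances between distinct points of `S`. -/
def distSet {n : ℕ} (S : Set (EuclideanSpace ℝ (Fin n))) : Set ℝ :=
  {d | ∃ x ∈ S, ∃ y ∈ S, x ≠ y ∧ d = dist x y}

/-- `S` is an `s`-distance set: exactly `s` distances occur between distinct points. -/
def IsSDistanceSet {n : ℕ} (s : ℕ) (S : Set (EuclideanSpace ℝ (Fin n))) : Prop :=
  (distSet S).Finite ∧ (distSet S).ncard = s

/-- The representation `J̃'(n-1,2) = {eᵢ + eⱼ : 1 ≤ i < j ≤ n-1}` of the Johnson graph
`J(n-1,2)` inside `ℝⁿ` (0-based: indices `< n-1`, i.e. all but the last coordinate). -/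
def JohnsonRep' (n : ℕ) : Set (EuclideanSpace ℝ (Fin n)) :=
  {x | ∃ i j : Fin n, (i : ℕ) < (j : ℕ) ∧ (j : ℕ) < n - 1 ∧
    x = EuclideanSpace.single i 1 + EuclideanSpace.single j 1}

/-- The hyperplane `H = {x ∈ ℝⁿ : ∑ xᵢ = 2}`. -/
def Hyp2 (n : ℕ) : Set (EuclideanSpace ℝ (Fin n)) :=
  {x | ∑ i, x i = (2 : ℝ)}

/-- The single vector `((1/3)^8, -2/3) ∈ ℝ⁹`. -/
def V0nine : Set (EuclideanSpace ℝ (Fin 9)) :=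
  {x | (∀ i : Fin 9, (i : ℕ) < 8 → x i = 1/3) ∧ (∀ i : Fin 9, (i : ℕ) = 8 → x i = -2/3)}

/-- The 8 vectors `eᵢ + e₉` (`1 ≤ i ≤ 8`) in `ℝ⁹`. -/
def Enine : Set (EuclideanSpace ℝ (Fin 9)) :=
  {x | ∃ i : Fin 9, (i : ℕ) < 8 ∧
    x = EuclideanSpace.single i 1 + EuclideanSpace.single (⟨8, by norm_num⟩ : Fin 9) 1}

/-- The 8 vectors `((1/3)^7, -2/3, 1/3)^{P'} ∈ ℝ⁹`: seven of the first eight coordinates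
equal `1/3`, one of the first eight equals `-2/3`, and the last equals `1/3`. -/
def Wnine : Set (EuclideanSpace ℝ (Fin 9)) :=
  {x | {i : Fin 9 | (i : ℕ) < 8 ∧ x i = 1/3}.ncard = 7 ∧
    {i : Fin 9 | (i : ℕ) < 8 ∧ x i = -2/3}.ncard = 1 ∧
    (∀ i : Fin 9, (i : ℕ) = 8 → x i = 1/3)}

open RealInnerProductSpace

namespace MaxAux

def pt (i j : Fin 9) : EuclideanSpace ℝ (Fin 9) :=
  EuclideanSpace.single i 1 + EuclideanSpace.single j 1

def uA : EuclideanSpace ℝ (Fin 9) := ∑ m : Fin 9, EuclideanSpace.single m (1:ℝ)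

def qq (a : Fin 9) : EuclideanSpace ℝ (Fin 9) := (3⁻¹ : ℝ) • uA - EuclideanSpace.single a 1

lemma uA_apply (m : Fin 9) : uA m = 1 := by
  rw [uA]; simp [PiLp.single_apply]

lemma pt_apply (i j m : Fin 9) :
    pt i j m = (if m = i then (1:ℝ) else 0) + (if m = j then 1 else 0) := by
  simp [pt, EuclideanSpace.single_apply]

lemma qq_apply (a m : Fin 9) : qq a m = if m = a then -(2/3 : ℝ) else 1/3 := by
  have : qq a m = 3⁻¹ * uA m - (EuclideanSpace.single a (1:ℝ)) m := rfl
  rw [this, uA_apply, EuclideanSpace.single_apply]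
  split_ifs <;> norm_num

lemma inner_pt (x : EuclideanSpace ℝ (Fin 9)) (i j : Fin 9) :
    ⟪x, pt i j⟫ = x i + x j := by
  simp [pt, inner_add_right, EuclideanSpace.inner_single_right, mul_comm]

lemma inner_uA (x : EuclideanSpace ℝ (Fin 9)) : ⟪x, uA⟫ = ∑ m, x m := by
  simp [uA, inner_sum, EuclideanSpace.inner_single_right]

lemma inner_qq (x : EuclideanSpace ℝ (Fin 9)) (a : Fin 9) :
    ⟪x, qq a⟫ = 3⁻¹ * (∑ m, x m) - x a := by
  simp [qq, inner_sub_right, inner_smul_right, inner_uA, EuclideanSpace.inner_single_right,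
    uA_apply, mul_comm]

lemma sum_pt (i j : Fin 9) : ∑ m, pt i j m = 2 := by
  have h := inner_pt uA i j
  rw [real_inner_comm, inner_uA] at h
  rw [h, uA_apply, uA_apply]; norm_num

lemma sum_qq (a : Fin 9) : ∑ m, qq a m = 2 := by
  have h := inner_qq uA a
  rw [real_inner_comm, inner_uA] at h
  rw [h, uA_apply]
  have : ∑ m : Fin 9, uA m = 9 := by simp [uA_apply]
  rw [this]; norm_num


lemma norm_pt_sq {i j : Fin 9} (h : i ≠ j) : ‖pt i j‖ ^ 2 = 2 := by
  rw [← real_inner_self_eq_norm_sq, inner_pt, pt_apply, pt_apply]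
  simp [h, h.symm]; norm_num

lemma norm_qq_sq (a : Fin 9) : ‖qq a‖ ^ 2 = 4/3 := by
  rw [← real_inner_self_eq_norm_sq, inner_qq, sum_qq, qq_apply]
  norm_num

lemma dist_sq (x y : EuclideanSpace ℝ (Fin 9)) :
    dist x y ^ 2 = ‖x‖ ^ 2 - 2 * ⟪x, y⟫ + ‖y‖ ^ 2 := by
  rw [dist_eq_norm, norm_sub_sq_real]

lemma dist_of_sq2 {x y : EuclideanSpace ℝ (Fin 9)} (h : dist x y ^ 2 = 2) :
    dist x y = Real.sqrt 2 := by
  rw [← h, Real.sqrt_sq dist_nonneg]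

lemma dist_of_sq4 {x y : EuclideanSpace ℝ (Fin 9)} (h : dist x y ^ 2 = 4) :
    dist x y = 2 := by
  nlinarith [dist_nonneg (x := x) (y := y)]

lemma d2_pt_pt {i j k l : Fin 9} (hij : i < j) (hkl : k < l) (hne : ¬(i = k ∧ j = l)) :
    dist (pt i j) (pt k l) ^ 2 = 2 ∨ dist (pt i j) (pt k l) ^ 2 = 4 := by
  have hij' : i ≠ j := ne_of_lt hij
  have hkl' : k ≠ l := ne_of_lt hkl
  have h := dist_sq (pt i j) (pt k l)
  rw [inner_pt, norm_pt_sq hij', norm_pt_sq hkl', pt_apply, pt_apply] at h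
  by_cases h1 : k = i
  · subst h1
    have h2 : ¬ k = j := hij'
    have h3 : ¬ l = k := (ne_of_lt hkl).symm
    have h4 : ¬ l = j := fun e => hne ⟨rfl, e.symm⟩
    rw [if_pos rfl, if_neg h2, if_neg h3, if_neg h4] at h
    left; linarith
  · by_cases h2 : k = j
    · subst h2
      have h3 : ¬ l = i := (ne_of_lt (lt_trans hij hkl)).symm
      have h4 : ¬ l = k := (ne_of_lt hkl).symm
      rw [if_neg h1, if_pos rfl, if_neg h3, if_neg h4] at h
      left; linarith
    · by_cases h3 : l = i
      · subst h3
        have h4 : ¬ l = j := ne_of_lt hij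
        rw [if_neg h1, if_neg h2, if_pos rfl, if_neg h4] at h
        left; linarith
      · by_cases h4 : l = j
        · subst h4
          rw [if_neg h1, if_neg h2, if_neg h3, if_pos rfl] at h
          left; linarith
        · rw [if_neg h1, if_neg h2, if_neg h3, if_neg h4] at h
          right; linarith

lemma d2_pt_qq {i j : Fin 9} (a : Fin 9) (hij : i ≠ j) :
    dist (pt i j) (qq a) ^ 2 = 2 ∨ dist (pt i j) (qq a) ^ 2 = 4 := by
  have h := dist_sq (pt i j) (qq a)
  rw [inner_qq, sum_pt, norm_pt_sq hij, norm_qq_sq, pt_apply] at h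
  by_cases h1 : a = i
  · subst h1
    have h2 : ¬ a = j := hij
    rw [if_pos rfl, if_neg h2] at h
    right; linarith
  · by_cases h2 : a = j
    · subst h2
      rw [if_neg h1, if_pos rfl] at h
      right; linarith
    · rw [if_neg h1, if_neg h2] at h
      left; linarith

lemma d2_qq_qq {a b : Fin 9} (hab : a ≠ b) : dist (qq a) (qq b) ^ 2 = 2 := by
  have h := dist_sq (qq a) (qq b)
  rw [inner_qq, sum_qq, norm_qq_sq, norm_qq_sq, qq_apply, if_neg hab.symm] at h
  linarith


def e8 : Fin 9 := ⟨8, by norm_num⟩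

def Spt : Set (EuclideanSpace ℝ (Fin 9)) := {x | ∃ i j : Fin 9, i < j ∧ x = pt i j}

def Sqq : Set (EuclideanSpace ℝ (Fin 9)) := Set.range qq

lemma JE_eq : JohnsonRep' 9 ∪ Enine = Spt := by
  ext x
  simp only [JohnsonRep', Enine, Spt, Set.mem_union, Set.mem_setOf_eq]
  constructor
  · rintro (⟨i, j, hlt, hj, hx⟩ | ⟨i, hi, hx⟩)
    · exact ⟨i, j, hlt, hx⟩
    · exact ⟨i, e8, hi, hx⟩
  · rintro ⟨i, j, hij, hx⟩
    have hj9 : (j : ℕ) < 9 := j.isLt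
    rcases Nat.lt_or_ge (j : ℕ) 8 with hj | hj
    · exact Or.inl ⟨i, j, hij, by omega, hx⟩
    · have hj8 : (j : ℕ) = 8 := by omega
      have hje : j = e8 := Fin.ext hj8
      subst hje
      exact Or.inr ⟨i, hij, hx⟩

lemma U_fin_eq : {i : Fin 9 | (i : ℕ) < 8} = ↑(Finset.univ.filter (fun i : Fin 9 => (i : ℕ) < 8)) := by
  ext i; simp

lemma U_ncard : ({i : Fin 9 | (i : ℕ) < 8} : Set (Fin 9)).ncard = 8 := by
  rw [U_fin_eq, Set.ncard_coe_finset]; decide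

lemma Uk_ncard {k : Fin 9} (hk : (k : ℕ) < 8) :
    (({i : Fin 9 | (i : ℕ) < 8} \ {k}) : Set (Fin 9)).ncard = 7 := by
  classical
  have h1 : (({i : Fin 9 | (i : ℕ) < 8} \ {k}) : Set (Fin 9)) =
      ↑((Finset.univ.filter (fun i : Fin 9 => (i : ℕ) < 8)).erase k) := by
    ext i; simp [Finset.mem_erase, and_comm]
  rw [h1, Set.ncard_coe_finset, Finset.card_erase_of_mem (by simp [hk])]
  decide

lemma qq_mem_Wnine {k : Fin 9} (hk : (k : ℕ) < 8) : qq k ∈ Wnine := by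
  classical
  have hA7 : {i : Fin 9 | (i : ℕ) < 8 ∧ qq k i = 1/3} = {i : Fin 9 | (i : ℕ) < 8} \ {k} := by
    ext i
    simp only [Set.mem_setOf_eq, Set.mem_diff, Set.mem_singleton_iff, qq_apply]
    constructor
    · rintro ⟨h8, hval⟩
      refine ⟨h8, fun e => ?_⟩
      rw [if_pos e] at hval; norm_num at hval
    · rintro ⟨h8, hne⟩
      exact ⟨h8, by rw [if_neg hne]⟩
  have hA1 : {i : Fin 9 | (i : ℕ) < 8 ∧ qq k i = -2/3} = {k} := by
    ext i
    simp only [Set.mem_setOf_eq, Set.mem_singleton_iff, qq_apply]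
    constructor
    · rintro ⟨h8, hval⟩
      by_contra hne
      rw [if_neg hne] at hval; norm_num at hval
    · rintro rfl
      exact ⟨hk, by rw [if_pos rfl]; norm_num⟩
  refine ⟨?_, ?_, ?_⟩
  · rw [hA7, Uk_ncard hk]
  · rw [hA1, Set.ncard_singleton]
  · intro i hi
    have hne : i ≠ k := by
      intro e; rw [e] at hi; omega
    rw [qq_apply, if_neg hne]

lemma Wnine_eq : Wnine = {x | ∃ k : Fin 9, (k : ℕ) < 8 ∧ x = qq k} := by
  ext x
  simp only [Set.mem_setOf_eq]
  constructor
  · rintro ⟨h7, h1, h8⟩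
    obtain ⟨k, hk⟩ := Set.ncard_eq_one.mp h1
    have hkmem : k ∈ {i : Fin 9 | (i : ℕ) < 8 ∧ x i = -2/3} := by rw [hk]; rfl
    obtain ⟨hk8, hkval⟩ := hkmem
    have hsub : {i : Fin 9 | (i : ℕ) < 8 ∧ x i = 1/3} ⊆ {i : Fin 9 | (i : ℕ) < 8} \ {k} := by
      rintro i ⟨hi8, hival⟩
      refine ⟨hi8, fun e => ?_⟩
      rw [Set.mem_singleton_iff] at e
      rw [e, hkval] at hival; norm_num at hival
    have heq : {i : Fin 9 | (i : ℕ) < 8 ∧ x i = 1/3} = {i : Fin 9 | (i : ℕ) < 8} \ {k} :=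
      Set.eq_of_subset_of_ncard_le hsub (by rw [Uk_ncard hk8, h7])
    refine ⟨k, hk8, PiLp.ext fun m => ?_⟩
    rcases Nat.lt_or_ge (m : ℕ) 8 with hm | hm
    · by_cases hmk : m = k
      · rw [hmk, hkval, qq_apply, if_pos rfl]; norm_num
      · have : m ∈ {i : Fin 9 | (i : ℕ) < 8} \ {k} := ⟨hm, hmk⟩
        rw [← heq] at this
        rw [this.2, qq_apply, if_neg hmk]
    · have hm8 : (m : ℕ) = 8 := by have := m.isLt; omega
      have hmk : m ≠ k := by intro e; rw [e] at hm8; omega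
      rw [h8 m hm8, qq_apply, if_neg hmk]
  · rintro ⟨k, hk, rfl⟩
    exact qq_mem_Wnine hk

lemma V0nine_eq : V0nine = {qq e8} := by
  ext x
  simp only [V0nine, Set.mem_setOf_eq, Set.mem_singleton_iff]
  constructor
  · rintro ⟨h1, h2⟩
    refine PiLp.ext fun m => ?_
    rcases Nat.lt_or_ge (m : ℕ) 8 with hm | hm
    · have hme : m ≠ e8 := by intro e; rw [e] at hm; exact absurd hm (by norm_num [e8])
      rw [h1 m hm, qq_apply, if_neg hme]
    · have hm8 : (m : ℕ) = 8 := by have := m.isLt; omega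
      have hme : m = e8 := Fin.ext hm8
      rw [h2 m hm8, qq_apply, if_pos hme]; norm_num
  · rintro rfl
    constructor
    · intro i hi
      have hne : i ≠ e8 := by intro e; rw [e] at hi; exact absurd hi (by norm_num [e8])
      rw [qq_apply, if_neg hne]
    · intro i hi
      have he : i = e8 := Fin.ext hi
      rw [qq_apply, if_pos he]; norm_num

lemma VW_eq : V0nine ∪ Wnine = Sqq := by
  rw [V0nine_eq, Wnine_eq]
  ext x
  simp only [Set.mem_union, Set.mem_singleton_iff, Set.mem_setOf_eq, Sqq, Set.mem_range]
  constructor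
  · rintro (rfl | ⟨k, _, rfl⟩)
    · exact ⟨e8, rfl⟩
    · exact ⟨k, rfl⟩
  · rintro ⟨a, rfl⟩
    rcases Nat.lt_or_ge (a : ℕ) 8 with ha | ha
    · exact Or.inr ⟨a, ha, rfl⟩
    · have : a = e8 := Fin.ext (by have h1 := a.isLt; have h2 : (e8 : ℕ) = 8 := rfl; omega)
      exact Or.inl (by rw [this])

lemma S_eq : JohnsonRep' 9 ∪ V0nine ∪ Enine ∪ Wnine = Spt ∪ Sqq := by
  have : JohnsonRep' 9 ∪ V0nine ∪ Enine ∪ Wnine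
      = (JohnsonRep' 9 ∪ Enine) ∪ (V0nine ∪ Wnine) := by
    rw [Set.union_assoc, Set.union_assoc]
    rw [Set.union_comm V0nine (Enine ∪ Wnine)]
    rw [Set.union_assoc, Set.union_assoc]
    rw [Set.union_comm Wnine V0nine]
  rw [this, JE_eq, VW_eq]


lemma pt_inj {i j k l : Fin 9} (hij : i < j) (hkl : k < l) (h : pt i j = pt k l) :
    i = k ∧ j = l := by
  by_contra hne
  rcases d2_pt_pt hij hkl hne with h2 | h2 <;> rw [h, dist_self] at h2 <;> norm_num at h2

lemma qq_inj : Function.Injective qq := by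
  intro a b h
  by_contra hne
  have h2 := d2_qq_qq hne
  rw [h, dist_self] at h2; norm_num at h2

lemma pt_ne_qq {i j : Fin 9} (hij : i ≠ j) (a : Fin 9) : pt i j ≠ qq a := by
  intro h
  rcases d2_pt_qq a hij with h2 | h2 <;> rw [h, dist_self] at h2 <;> norm_num at h2

lemma Spt_finite : Spt.Finite := by
  apply Set.Finite.subset (Set.finite_range (fun p : Fin 9 × Fin 9 => pt p.1 p.2))
  rintro x ⟨i, j, _, rfl⟩
  exact ⟨(i, j), rfl⟩

lemma Sqq_finite : Sqq.Finite := Set.finite_range qq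

lemma Spt_ncard : Spt.ncard = 36 := by
  classical
  have hco : Spt = ↑((Finset.univ.filter (fun p : Fin 9 × Fin 9 => p.1 < p.2)).image
      (fun p => pt p.1 p.2)) := by
    ext x
    simp only [Finset.coe_image, Set.mem_image, Finset.mem_coe, Finset.mem_filter,
      Finset.mem_univ, true_and, Spt, Set.mem_setOf_eq]
    constructor
    · rintro ⟨i, j, hij, rfl⟩; exact ⟨(i, j), hij, rfl⟩
    · rintro ⟨⟨i, j⟩, hij, rfl⟩; exact ⟨i, j, hij, rfl⟩
  rw [hco, Set.ncard_coe_finset, Finset.card_image_of_injOn]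
  · decide
  · rintro ⟨i, j⟩ hij ⟨k, l⟩ hkl h
    simp only [Finset.coe_filter, Finset.mem_univ, true_and, Set.mem_setOf_eq] at hij hkl
    obtain ⟨h1, h2⟩ := pt_inj hij hkl h
    simp [h1, h2, Prod.ext_iff]

lemma Sqq_ncard : Sqq.ncard = 9 := by
  classical
  have hco : Sqq = ↑(Finset.univ.image qq) := by
    ext x; simp [Sqq]
  rw [hco, Set.ncard_coe_finset, Finset.card_image_of_injective _ qq_inj,
    Finset.card_univ, Fintype.card_fin]

lemma S_disj : Disjoint Spt Sqq := by
  rw [Set.disjoint_left]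
  rintro x ⟨i, j, hij, rfl⟩ ⟨a, ha⟩
  exact pt_ne_qq (ne_of_lt hij) a ha.symm

lemma S_ncard : (Spt ∪ Sqq).ncard = 45 := by
  rw [Set.ncard_union_eq S_disj Spt_finite Sqq_finite, Spt_ncard, Sqq_ncard]

lemma S_finite : (Spt ∪ Sqq).Finite := Set.Finite.union Spt_finite Sqq_finite

lemma S_sub_H : Spt ∪ Sqq ⊆ Hyp2 9 := by
  rintro x (⟨i, j, _, rfl⟩ | ⟨a, rfl⟩)
  · exact sum_pt i j
  · exact sum_qq a

lemma d2_mem {x y : EuclideanSpace ℝ (Fin 9)} (hx : x ∈ Spt ∪ Sqq) (hy : y ∈ Spt ∪ Sqq)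
    (hne : x ≠ y) : dist x y ^ 2 = 2 ∨ dist x y ^ 2 = 4 := by
  rcases hx with ⟨i, j, hij, rfl⟩ | ⟨a, rfl⟩ <;> rcases hy with ⟨k, l, hkl, rfl⟩ | ⟨b, rfl⟩
  · apply d2_pt_pt hij hkl
    rintro ⟨rfl, rfl⟩; exact hne rfl
  · exact d2_pt_qq b (ne_of_lt hij)
  · rw [dist_comm]; exact d2_pt_qq a (ne_of_lt hkl)
  · exact Or.inl (d2_qq_qq (fun e => hne (by rw [e])))

lemma dsq_01_02 : dist (pt 0 1) (pt 0 2) ^ 2 = 2 := by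
  have h := dist_sq (pt 0 1) (pt 0 2)
  rw [inner_pt, norm_pt_sq (by decide), norm_pt_sq (by decide), pt_apply, pt_apply] at h
  norm_num at h
  rw [if_neg (by decide : ¬(2 : Fin 9) = 0), if_neg (by decide : ¬(2 : Fin 9) = 1)] at h
  linarith

lemma dsq_01_23 : dist (pt 0 1) (pt 2 3) ^ 2 = 4 := by
  have h := dist_sq (pt 0 1) (pt 2 3)
  rw [inner_pt, norm_pt_sq (by decide), norm_pt_sq (by decide), pt_apply, pt_apply] at h
  rw [if_neg (by decide : ¬(2 : Fin 9) = 0), if_neg (by decide : ¬(2 : Fin 9) = 1),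
    if_neg (by decide : ¬(3 : Fin 9) = 0), if_neg (by decide : ¬(3 : Fin 9) = 1)] at h
  linarith

lemma sqrt2_ne_two : Real.sqrt 2 ≠ 2 := by
  intro h
  have h2 := Real.sq_sqrt (by norm_num : (0:ℝ) ≤ 2)
  rw [h] at h2
  norm_num at h2

lemma distSet_S : distSet (Spt ∪ Sqq) = {Real.sqrt 2, 2} := by
  apply Set.Subset.antisymm
  · rintro d ⟨x, hx, y, hy, hne, rfl⟩
    rcases d2_mem hx hy hne with h | h
    · exact Or.inl (dist_of_sq2 h)
    · exact Or.inr (dist_of_sq4 h)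
  · have h01 : pt 0 1 ∈ Spt ∪ Sqq := Or.inl ⟨0, 1, by decide, rfl⟩
    have h02 : pt 0 2 ∈ Spt ∪ Sqq := Or.inl ⟨0, 2, by decide, rfl⟩
    have h23 : pt 2 3 ∈ Spt ∪ Sqq := Or.inl ⟨2, 3, by decide, rfl⟩
    have hne1 : pt 0 1 ≠ pt 0 2 := by
      intro e
      have := dsq_01_02; rw [e, dist_self] at this; norm_num at this
    have hne2 : pt 0 1 ≠ pt 2 3 := by
      intro e
      have := dsq_01_23; rw [e, dist_self] at this; norm_num at this
    rintro d (rfl | rfl)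
    · exact ⟨pt 0 1, h01, pt 0 2, h02, hne1, (dist_of_sq2 dsq_01_02).symm⟩
    · exact ⟨pt 0 1, h01, pt 2 3, h23, hne2, (dist_of_sq4 dsq_01_23).symm⟩


lemma maximality :
    ¬∃ y ∈ Hyp2 9 \ (Spt ∪ Sqq), IsSDistanceSet 2 ((Spt ∪ Sqq) ∪ {y}) := by
  classical
  rintro ⟨y, ⟨hyH, hyS⟩, hfin, hcard⟩
  have hDsub : distSet (Spt ∪ Sqq) ⊆ distSet ((Spt ∪ Sqq) ∪ {y}) := by
    rintro d ⟨a, ha, b, hb, hne, rfl⟩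
    exact ⟨a, Or.inl ha, b, Or.inl hb, hne, rfl⟩
  have hDeq : ({Real.sqrt 2, 2} : Set ℝ) = distSet ((Spt ∪ Sqq) ∪ {y}) := by
    apply Set.eq_of_subset_of_ncard_le
    · rw [← distSet_S]; exact hDsub
    · rw [hcard, Set.ncard_pair sqrt2_ne_two]
    · exact hfin
  have key : ∀ x ∈ Spt ∪ Sqq, dist y x ^ 2 = 2 ∨ dist y x ^ 2 = 4 := by
    intro x hx
    have hne : y ≠ x := fun e => hyS (e ▸ hx)
    have hmem : dist y x ∈ distSet ((Spt ∪ Sqq) ∪ {y}) :=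
      ⟨y, Or.inr rfl, x, Or.inl hx, hne, rfl⟩
    rw [← hDeq] at hmem
    rcases hmem with h | h
    · left; rw [h]; exact Real.sq_sqrt (by norm_num)
    · right; rw [Set.mem_singleton_iff] at h; rw [h]; norm_num
  have hsumy : ∑ m, y m = 2 := hyH
  set N := ‖y‖ ^ 2 with hN
  have hcoord : ∀ a : Fin 9, y a = (2 - N)/2 ∨ y a = (4 - N)/2 := by
    intro a
    have h := key (qq a) (Or.inr ⟨a, rfl⟩)
    rw [dist_sq, inner_qq, hsumy, norm_qq_sq] at h
    rcases h with h | h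
    · left; linarith
    · right; linarith
  have hpair : ∀ i j : Fin 9, i ≠ j → y i + y j = (N - 2)/2 ∨ y i + y j = N/2 := by
    have base : ∀ i j : Fin 9, i < j → y i + y j = (N - 2)/2 ∨ y i + y j = N/2 := by
      intro i j hij
      have h := key (pt i j) (Or.inl ⟨i, j, hij, rfl⟩)
      rw [dist_sq, inner_pt, norm_pt_sq (ne_of_lt hij)] at h
      rcases h with h | h
      · right; linarith
      · left; linarith
    intro i j hij
    rcases lt_or_gt_of_ne hij with h | h
    · exact base i j h
    · rcases base j i h with h' | h'
      · left; linarith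
      · right; linarith
  set B : Finset (Fin 9) := Finset.univ.filter (fun a => y a = (4 - N)/2) with hB
  have hBm : ∀ a ∈ B, y a = (4 - N)/2 := by
    intro a ha; exact (Finset.mem_filter.mp ha).2
  have hBc : ∀ a ∉ B, y a = (2 - N)/2 := by
    intro a ha
    rcases hcoord a with h | h
    · exact h
    · exact absurd (Finset.mem_filter.mpr ⟨Finset.mem_univ a, h⟩) ha
  have hmle9 : B.card ≤ 9 := le_trans (Finset.card_le_univ B) (by simp)
  have hcardc : B.card + Bᶜ.card = 9 := by
    rw [Finset.card_add_card_compl]; simp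
  have hcc : (B.card : ℝ) + (Bᶜ.card : ℝ) = 9 := by
    exact_mod_cast congrArg (Nat.cast : ℕ → ℝ) hcardc
  have hSB : ∑ a ∈ B, y a = (B.card : ℝ) * ((4 - N)/2) := by
    rw [Finset.sum_congr rfl hBm, Finset.sum_const, nsmul_eq_mul]
  have hSBc : ∑ a ∈ Bᶜ, y a = (Bᶜ.card : ℝ) * ((2 - N)/2) := by
    rw [Finset.sum_congr rfl (fun a ha => hBc a (Finset.mem_compl.mp ha)),
      Finset.sum_const, nsmul_eq_mul]
  have hsum_split : ∑ a ∈ B, y a + ∑ a ∈ Bᶜ, y a = 2 := by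
    rw [Finset.sum_add_sum_compl]
    exact hsumy
  have hNm : 9 * N = 14 + 2 * (B.card : ℝ) := by
    rw [hSB, hSBc] at hsum_split
    nlinarith [hsum_split, hcc]
  have hbig : 2 ≤ B.card → ∃ a b, a ≠ b ∧ y a = (4 - N)/2 ∧ y b = (4 - N)/2 := by
    intro h2
    obtain ⟨a, ha, b, hb, hab⟩ := Finset.one_lt_card.mp (show 1 < B.card by omega)
    exact ⟨a, b, hab, hBm a ha, hBm b hb⟩
  have hsmall : B.card ≤ 7 → ∃ a b, a ≠ b ∧ y a = (2 - N)/2 ∧ y b = (2 - N)/2 := by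
    intro h7
    obtain ⟨a, ha, b, hb, hab⟩ :=
      Finset.one_lt_card.mp (show 1 < Bᶜ.card by omega)
    exact ⟨a, b, hab, hBc a (Finset.mem_compl.mp ha), hBc b (Finset.mem_compl.mp hb)⟩
  have hmix : 1 ≤ B.card → B.card ≤ 8 →
      ∃ a b, a ≠ b ∧ y a = (4 - N)/2 ∧ y b = (2 - N)/2 := by
    intro h1 h8
    obtain ⟨a, ha⟩ := Finset.card_pos.mp (show 0 < B.card by omega)
    obtain ⟨b, hb⟩ := Finset.card_pos.mp (show 0 < Bᶜ.card by omega)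
    have hb' := Finset.mem_compl.mp hb
    exact ⟨a, b, fun e => hb' (e ▸ ha), hBm a ha, hBc b hb'⟩
  obtain ⟨m, hm⟩ : ∃ m, m = B.card := ⟨_, rfl⟩
  rw [← hm] at hNm hbig hsmall hmix hmle9
  interval_cases m <;>
    [ (obtain ⟨a, b, hab, h1, h2⟩ := hsmall (by norm_num));
      (obtain ⟨a, b, hab, h1, h2⟩ := hsmall (by norm_num));
      (obtain ⟨a, b, hab, h1, h2⟩ := hbig (by norm_num));
      (obtain ⟨a, b, hab, h1, h2⟩ := hbig (by norm_num));
      (obtain ⟨a, b, hab, h1, h2⟩ := hbig (by norm_num));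
      (obtain ⟨a, b, hab, h1, h2⟩ := hsmall (by norm_num));
      (obtain ⟨a, b, hab, h1, h2⟩ := hbig (by norm_num));
      (obtain ⟨a, b, hab, h1, h2⟩ := hbig (by norm_num));
      (obtain ⟨a, b, hab, h1, h2⟩ := hmix (by norm_num) (by norm_num));
      (obtain ⟨a, b, hab, h1, h2⟩ := hbig (by norm_num))] <;>
    norm_num at hNm <;>
    rcases hpair a b hab with h | h <;>
    linarith

end MaxAux

theorem maximal_two_distance_R9 :
    (JohnsonRep' 9 ∪ V0nine ∪ Enine ∪ Wnine).ncard = 45 ∧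
    (JohnsonRep' 9 ∪ V0nine ∪ Enine ∪ Wnine) ⊆ Hyp2 9 ∧
    IsSDistanceSet 2 (JohnsonRep' 9 ∪ V0nine ∪ Enine ∪ Wnine) ∧
    distSet (JohnsonRep' 9 ∪ V0nine ∪ Enine ∪ Wnine) = {Real.sqrt 2, 2} ∧
    (¬∃ y ∈ Hyp2 9 \ (JohnsonRep' 9 ∪ V0nine ∪ Enine ∪ Wnine),
      IsSDistanceSet 2 (JohnsonRep' 9 ∪ V0nine ∪ Enine ∪ Wnine ∪ {y})) := by
  rw [MaxAux.S_eq]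
  refine ⟨MaxAux.S_ncard, MaxAux.S_sub_H, ⟨?_, ?_⟩, MaxAux.distSet_S, MaxAux.maximality⟩
  · rw [MaxAux.distSet_S]
    exact (Set.finite_singleton 2).insert _
  · rw [MaxAux.distSet_S, Set.ncard_pair MaxAux.sqrt2_ne_two]
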